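/- arXiv:2211.11484 — 2 statements merged into one kernel-verified Lean document; each statement's English description precedes it below -/
import Mathlib

section
/- The infinite series ∑_{k=0}^∞ (6k+1) · ((1/2)_k)^3 / (k!^3 · 4^k) equals 4/π, where (x)_k denotes the Pochhammer (rising factorial) symbol. -/
open Real

noncomputable def poch (x : ℝ) (k : ℕ) : ℝ := ∏ i ∈ Finset.range k, (x + i)

noncomputable def H2 (n : ℕ) : ℝ := ∑ i ∈ Finset.range n, 1 / ((i : ℝ) + 1) ^ 2

namespace WZaux

lemma poch_succ (x : ℝ) (n : ℕ) : poch x (n + 1) = poch x n * (x + n) := by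
  simp [poch, Finset.prod_range_succ]

lemma poch_pos {x : ℝ} (hx : 0 < x) (n : ℕ) : 0 < poch x n := by
  apply Finset.prod_pos
  intro i _
  positivity

lemma poch_half_le_factorial (n : ℕ) : poch (1/2) n ≤ (n.factorial : ℝ) := by
  induction n with
  | zero => simp [poch]
  | succ n ih =>
      rw [poch_succ, Nat.factorial_succ]
      push_cast
      have h1 : (1:ℝ)/2 + n ≤ (n:ℝ) + 1 := by linarith
      have h2 : (0:ℝ) ≤ 1/2 + n := by positivity
      calc poch (1/2) n * (1/2 + n) ≤ (n.factorial : ℝ) * ((n:ℝ) + 1) := by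
            apply mul_le_mul ih h1 h2 (by positivity)
        _ = ((n:ℝ) + 1) * (n.factorial : ℝ) := by ring

/-- The WZ weight. -/
noncomputable def W (n k : ℕ) : ℝ :=
  poch (1/2) k ^ 3 * poch (1/2) n ^ 2 /
    ((k.factorial : ℝ) * ((n + k).factorial : ℝ) ^ 2 * 4 ^ k)

noncomputable def F (n k : ℕ) : ℝ := (6 * (k : ℝ) + 4 * n + 1) * W n k

noncomputable def G (n k : ℕ) : ℝ := 8 * (k : ℝ) * W n k

lemma W_pos (n k : ℕ) : 0 < W n k := by
  unfold W
  have h1 := poch_pos (by norm_num : (0:ℝ) < 1/2) k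
  have h2 := poch_pos (by norm_num : (0:ℝ) < 1/2) n
  have h3 : (0:ℝ) < (k.factorial : ℝ) := by exact_mod_cast k.factorial_pos
  have h4 : (0:ℝ) < ((n+k).factorial : ℝ) := by exact_mod_cast (n+k).factorial_pos
  positivity

lemma W_succ_n (n k : ℕ) :
    W (n + 1) k = W n k * (((n:ℝ) + 1/2) ^ 2 / ((n:ℝ) + k + 1) ^ 2) := by
  have hnk : ((n + 1 + k).factorial : ℝ) = ((n:ℝ) + k + 1) * ((n + k).factorial : ℝ) := by
    have : n + 1 + k = (n + k) + 1 := by omega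
    rw [this, Nat.factorial_succ]
    push_cast; ring
  have h3 : ((k.factorial : ℝ)) ≠ 0 := by exact_mod_cast k.factorial_ne_zero
  have h4 : (((n+k).factorial : ℝ)) ≠ 0 := by exact_mod_cast (n+k).factorial_ne_zero
  have h5 : ((n:ℝ) + k + 1) ≠ 0 := by positivity
  have h6 : (4:ℝ) ^ k ≠ 0 := by positivity
  unfold W
  rw [poch_succ, hnk]
  push_cast
  field_simp
  ring

lemma W_succ_k (n k : ℕ) :
    W n (k + 1) = W n k * (((k:ℝ) + 1/2) ^ 3 / (4 * ((k:ℝ) + 1) * ((n:ℝ) + k + 1) ^ 2)) := by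
  have hnk : ((n + (k + 1)).factorial : ℝ) = ((n:ℝ) + k + 1) * ((n + k).factorial : ℝ) := by
    have : n + (k + 1) = (n + k) + 1 := by omega
    rw [this, Nat.factorial_succ]
    push_cast; ring
  have h3 : ((k.factorial : ℝ)) ≠ 0 := by exact_mod_cast k.factorial_ne_zero
  have h4 : (((n+k).factorial : ℝ)) ≠ 0 := by exact_mod_cast (n+k).factorial_ne_zero
  have h5 : ((n:ℝ) + k + 1) ≠ 0 := by positivity
  have h6 : (4:ℝ) ^ k ≠ 0 := by positivity
  have h7 : ((k:ℝ) + 1) ≠ 0 := by positivity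
  unfold W
  rw [poch_succ, Nat.factorial_succ, hnk, pow_succ]
  push_cast
  have : (1:ℝ)/2 + k = (k:ℝ) + 1/2 := by ring
  field_simp
  ring

/-- The WZ identity. -/
lemma wz (n k : ℕ) : F (n + 1) k - F n k = G n (k + 1) - G n k := by
  have h5 : ((n:ℝ) + k + 1) ≠ 0 := by positivity
  have h7 : ((k:ℝ) + 1) ≠ 0 := by positivity
  unfold F G
  rw [W_succ_n, W_succ_k]
  push_cast
  field_simp
  ring

lemma F_nonneg (n k : ℕ) : 0 ≤ F n k := by
  have := W_pos n k
  unfold F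
  positivity

lemma W_le (n k : ℕ) : W n k ≤ (poch (1/2) n / (n.factorial : ℝ)) ^ 2 * (1/4) ^ k := by
  have hp2 := poch_pos (by norm_num : (0:ℝ) < 1/2) n
  have hp1 := poch_pos (by norm_num : (0:ℝ) < 1/2) k
  have hkf : (0:ℝ) < (k.factorial : ℝ) := by exact_mod_cast k.factorial_pos
  have hnf : (0:ℝ) < (n.factorial : ℝ) := by exact_mod_cast n.factorial_pos
  have hnum : poch (1/2) k ^ 3 * poch (1/2) n ^ 2 ≤ (k.factorial : ℝ) ^ 3 * poch (1/2) n ^ 2 := by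
    have h : poch (1/2) k ^ 3 ≤ (k.factorial : ℝ) ^ 3 :=
      pow_le_pow_left₀ hp1.le (poch_half_le_factorial k) 3
    exact mul_le_mul_of_nonneg_right h (by positivity)
  have hfac : (n.factorial : ℝ) * (k.factorial : ℝ) ≤ ((n + k).factorial : ℝ) := by
    have := Nat.le_of_dvd (n+k).factorial_pos (Nat.factorial_mul_factorial_dvd_factorial_add n k)
    exact_mod_cast this
  have hden : (k.factorial : ℝ) * ((n.factorial : ℝ) * (k.factorial : ℝ)) ^ 2 * 4 ^ k ≤
      (k.factorial : ℝ) * ((n + k).factorial : ℝ) ^ 2 * 4 ^ k := by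
    have h2 : ((n.factorial : ℝ) * (k.factorial : ℝ)) ^ 2 ≤ ((n + k).factorial : ℝ) ^ 2 :=
      pow_le_pow_left₀ (by positivity) hfac 2
    have h4 : (0:ℝ) ≤ (4:ℝ) ^ k := by positivity
    exact mul_le_mul_of_nonneg_right (mul_le_mul_of_nonneg_left h2 hkf.le) h4
  have hdpos : (0:ℝ) < (k.factorial : ℝ) * ((n.factorial : ℝ) * (k.factorial : ℝ)) ^ 2 * 4 ^ k := by
    positivity
  have step : W n k ≤ (k.factorial : ℝ) ^ 3 * poch (1/2) n ^ 2 /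
      ((k.factorial : ℝ) * ((n.factorial : ℝ) * (k.factorial : ℝ)) ^ 2 * 4 ^ k) := by
    unfold W
    exact div_le_div₀ (by positivity) hnum hdpos hden
  calc W n k ≤ (k.factorial : ℝ) ^ 3 * poch (1/2) n ^ 2 /
        ((k.factorial : ℝ) * ((n.factorial : ℝ) * (k.factorial : ℝ)) ^ 2 * 4 ^ k) := step
    _ = (poch (1/2) n / (n.factorial : ℝ)) ^ 2 * (1/4) ^ k := by
        field_simp
        ring
        rw [← mul_pow]; norm_num

lemma summable_aux (c : ℝ) : Summable (fun k : ℕ => (6 * (k:ℝ) + c) * (1/4) ^ k) := by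
  have h1 : Summable (fun k : ℕ => (k:ℝ) * (1/4) ^ k) := by
    have := summable_pow_mul_geometric_of_norm_lt_one (R := ℝ) 1
      (r := 1/4) (by rw [Real.norm_eq_abs, abs_of_nonneg] <;> norm_num)
    simpa using this
  have h2 : Summable (fun k : ℕ => (1/4 : ℝ) ^ k) :=
    summable_geometric_of_lt_one (by norm_num) (by norm_num)
  have := (h1.mul_left 6).add (h2.mul_left c)
  apply this.congr
  intro k
  ring

lemma summable_F (n : ℕ) : Summable (fun k => F n k) := by
  have hb : Summable (fun k : ℕ => ((poch (1/2) n / (n.factorial : ℝ)) ^ 2) *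
      ((6 * (k:ℝ) + (4 * n + 1)) * (1/4) ^ k)) :=
    (summable_aux ((4:ℝ) * n + 1)).mul_left _
  refine Summable.of_nonneg_of_le (F_nonneg n) (fun k => ?_) hb
  calc F n k ≤ (6 * (k:ℝ) + 4 * n + 1) *
        ((poch (1/2) n / (n.factorial : ℝ)) ^ 2 * (1/4) ^ k) :=
        mul_le_mul_of_nonneg_left (W_le n k) (by positivity)
    _ = ((poch (1/2) n / (n.factorial : ℝ)) ^ 2) * ((6 * (k:ℝ) + (4 * n + 1)) * (1/4) ^ k) := by
        ring

noncomputable def S (n : ℕ) : ℝ := ∑' k, F n k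

lemma G_tendsto_zero (n : ℕ) : Filter.Tendsto (fun k => G n k) Filter.atTop (nhds 0) := by
  have hb : Summable (fun k : ℕ => 8 * ((poch (1/2) n / (n.factorial : ℝ)) ^ 2) *
      ((k:ℝ) * (1/4) ^ k)) := by
    have h1 : Summable (fun k : ℕ => (k:ℝ) * (1/4) ^ k) := by
      have := summable_pow_mul_geometric_of_norm_lt_one (R := ℝ) 1
        (r := 1/4) (by rw [Real.norm_eq_abs, abs_of_nonneg] <;> norm_num)
      simpa using this
    exact h1.mul_left _
  have hb0 := hb.tendsto_atTop_zero
  apply squeeze_zero (fun k => by have := W_pos n k; unfold G; positivity) _ hb0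
  intro k
  unfold G
  have h1 : (0:ℝ) ≤ 8 * (k:ℝ) := by positivity
  calc 8 * (k:ℝ) * W n k ≤ 8 * (k:ℝ) * ((poch (1/2) n / (n.factorial : ℝ)) ^ 2 * (1/4) ^ k) :=
        mul_le_mul_of_nonneg_left (W_le n k) h1
    _ = 8 * ((poch (1/2) n / (n.factorial : ℝ)) ^ 2) * ((k:ℝ) * (1/4) ^ k) := by ring

lemma S_succ (n : ℕ) : S (n + 1) = S n := by
  have hsub : Summable (fun k => F (n + 1) k - F n k) := (summable_F (n + 1)).sub (summable_F n)
  have h1 : ∑' k, (F (n + 1) k - F n k) = S (n + 1) - S n :=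
    Summable.tsum_sub (summable_F (n + 1)) (summable_F n)
  have h2 : ∑' k, (F (n + 1) k - F n k) = 0 := by
    have hsub' : Summable (fun k => G n (k + 1) - G n k) := by
      apply hsub.congr
      intro k
      exact wz n k
    have hts := hsub'.hasSum.tendsto_sum_nat
    have hps : ∀ N, ∑ k ∈ Finset.range N, (G n (k + 1) - G n k) = G n N - G n 0 := by
      intro N
      exact Finset.sum_range_sub (fun k => G n k) N
    have hG0 : G n 0 = 0 := by unfold G; simp
    have hlim : Filter.Tendsto (fun N => ∑ k ∈ Finset.range N, (G n (k + 1) - G n k))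
        Filter.atTop (nhds 0) := by
      simp only [hps, hG0, sub_zero]
      exact G_tendsto_zero n
    have := tendsto_nhds_unique hts hlim
    rw [tsum_congr (fun k => wz n k), this]
  rw [h1] at h2
  linarith

lemma S_const (n : ℕ) : S n = S 0 := by
  induction n with
  | zero => rfl
  | succ n ih => rw [S_succ, ih]

lemma F_head (n : ℕ) : F n 0 = (4 * (n:ℝ) + 1) * (poch (1/2) n / (n.factorial : ℝ)) ^ 2 := by
  have hnf : ((n.factorial : ℝ)) ≠ 0 := by exact_mod_cast n.factorial_ne_zero
  have h1 : poch (1/2) 0 = 1 := by simp [poch]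
  have h2 : W n 0 = poch (1/2) n ^ 2 / ((n.factorial : ℝ)) ^ 2 := by
    unfold W
    rw [h1]
    norm_num
  unfold F
  rw [h2]
  push_cast
  rw [div_pow]
  ring

lemma tail_bound (n k : ℕ) :
    F n (k + 1) ≤ (1 / ((n:ℝ) + 1)) * ((6 * (k:ℝ) + 7) * ((k:ℝ) + 1) ^ 2 * (1/4) ^ (k + 1)) := by
  have hp2 := poch_pos (by norm_num : (0:ℝ) < 1/2) n
  have hnf : (0:ℝ) < (n.factorial : ℝ) := by exact_mod_cast n.factorial_pos
  have hkf : (0:ℝ) < (k.factorial : ℝ) := by exact_mod_cast k.factorial_pos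
  have hk1f : (0:ℝ) < ((k+1).factorial : ℝ) := by exact_mod_cast (k+1).factorial_pos
  have hn1f : (0:ℝ) < ((n+1).factorial : ℝ) := by exact_mod_cast (n+1).factorial_pos
  have hWb : W n (k + 1) ≤ ((k:ℝ) + 1) ^ 2 * (1/4) ^ (k + 1) / ((n:ℝ) + 1) ^ 2 := by
    have hnum : poch (1/2) (k+1) ^ 3 * poch (1/2) n ^ 2 ≤
        ((k+1).factorial : ℝ) ^ 3 * (n.factorial : ℝ) ^ 2 := by
      have h1 : poch (1/2) (k+1) ^ 3 ≤ ((k+1).factorial : ℝ) ^ 3 :=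
        pow_le_pow_left₀ (poch_pos (by norm_num) (k+1)).le (poch_half_le_factorial (k+1)) 3
      have h2 : poch (1/2) n ^ 2 ≤ (n.factorial : ℝ) ^ 2 :=
        pow_le_pow_left₀ hp2.le (poch_half_le_factorial n) 2
      exact mul_le_mul h1 h2 (by positivity) (by positivity)
    have hfac : ((n+1).factorial : ℝ) * (k.factorial : ℝ) ≤ ((n + (k+1)).factorial : ℝ) := by
      have h := Nat.le_of_dvd (n+1+k).factorial_pos
        (Nat.factorial_mul_factorial_dvd_factorial_add (n+1) k)
      have he : (n+1) + k = n + (k+1) := by omega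
      rw [he] at h
      exact_mod_cast h
    have hden : ((k+1).factorial : ℝ) * (((n+1).factorial : ℝ) * (k.factorial : ℝ)) ^ 2 * 4 ^ (k+1)
        ≤ ((k+1).factorial : ℝ) * ((n + (k+1)).factorial : ℝ) ^ 2 * 4 ^ (k+1) := by
      have h2 : (((n+1).factorial : ℝ) * (k.factorial : ℝ)) ^ 2 ≤
          ((n + (k+1)).factorial : ℝ) ^ 2 := pow_le_pow_left₀ (by positivity) hfac 2
      exact mul_le_mul_of_nonneg_right (mul_le_mul_of_nonneg_left h2 hk1f.le) (by positivity)
    have hdpos : (0:ℝ) < ((k+1).factorial : ℝ) * (((n+1).factorial : ℝ) * (k.factorial : ℝ)) ^ 2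
        * 4 ^ (k+1) := by positivity
    have step1 : W n (k+1) ≤ ((k+1).factorial : ℝ) ^ 3 * (n.factorial : ℝ) ^ 2 /
        (((k+1).factorial : ℝ) * (((n+1).factorial : ℝ) * (k.factorial : ℝ)) ^ 2 * 4 ^ (k+1)) := by
      unfold W
      exact div_le_div₀ (by positivity) hnum hdpos hden
    have heq : ((k+1).factorial : ℝ) ^ 3 * (n.factorial : ℝ) ^ 2 /
        (((k+1).factorial : ℝ) * (((n+1).factorial : ℝ) * (k.factorial : ℝ)) ^ 2 * 4 ^ (k+1)) =
        ((k:ℝ) + 1) ^ 2 * (1/4) ^ (k + 1) / ((n:ℝ) + 1) ^ 2 := by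
      have hk1 : ((k+1).factorial : ℝ) = ((k:ℝ) + 1) * (k.factorial : ℝ) := by
        rw [Nat.factorial_succ]; push_cast; ring
      have hn1 : ((n+1).factorial : ℝ) = ((n:ℝ) + 1) * (n.factorial : ℝ) := by
        rw [Nat.factorial_succ]; push_cast; ring
      rw [hk1, hn1]
      field_simp
      ring
      rw [← mul_pow]; norm_num
    rw [heq] at step1
    exact step1
  have hcoef : (6 * ((k:ℝ)+1) + 4 * n + 1) ≤ (6 * (k:ℝ) + 7) * ((n:ℝ) + 1) := by
    nlinarith [Nat.cast_nonneg (α := ℝ) k, Nat.cast_nonneg (α := ℝ) n]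
  have hWpos := W_pos n (k+1)
  unfold F
  push_cast
  calc (6 * ((k:ℝ)+1) + 4 * n + 1) * W n (k+1)
      ≤ ((6 * (k:ℝ) + 7) * ((n:ℝ) + 1)) * W n (k+1) :=
        mul_le_mul_of_nonneg_right hcoef hWpos.le
    _ ≤ ((6 * (k:ℝ) + 7) * ((n:ℝ) + 1)) * (((k:ℝ) + 1) ^ 2 * (1/4) ^ (k + 1) / ((n:ℝ) + 1) ^ 2) := by
        apply mul_le_mul_of_nonneg_left hWb
        positivity
    _ = (1 / ((n:ℝ) + 1)) * ((6 * (k:ℝ) + 7) * ((k:ℝ) + 1) ^ 2 * (1/4) ^ (k + 1)) := by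
        have hne : ((n:ℝ) + 1) ≠ 0 := by positivity
        field_simp

lemma summable_tailb : Summable (fun k : ℕ => (6 * (k:ℝ) + 7) * ((k:ℝ) + 1) ^ 2 * (1/4) ^ (k+1)) := by
  have h : ∀ j : ℕ, Summable (fun k : ℕ => ((k:ℝ)) ^ j * (1/4 : ℝ) ^ k) := by
    intro j
    have := summable_pow_mul_geometric_of_norm_lt_one (R := ℝ) j
      (r := 1/4) (by rw [Real.norm_eq_abs, abs_of_nonneg] <;> norm_num)
    simpa using this
  have h3 := (h 3).mul_left (6/4 : ℝ)
  have h2 := (h 2).mul_left (19/4 : ℝ)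
  have h1 := (h 1).mul_left (20/4 : ℝ)
  have h0 := (h 0).mul_left (7/4 : ℝ)
  have := ((h3.add h2).add h1).add h0
  apply this.congr
  intro k
  rw [pow_succ]
  push_cast
  ring

noncomputable def Cb : ℝ := ∑' k : ℕ, (6 * (k:ℝ) + 7) * ((k:ℝ) + 1) ^ 2 * (1/4) ^ (k+1)

lemma tail_le (n : ℕ) : ∑' k, F n (k + 1) ≤ Cb / ((n:ℝ) + 1) := by
  have hs1 : Summable (fun k => F n (k + 1)) := (summable_nat_add_iff 1).2 (summable_F n)
  have hs2 := summable_tailb.mul_left (1 / ((n:ℝ) + 1))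
  calc ∑' k, F n (k + 1)
      ≤ ∑' k : ℕ, (1 / ((n:ℝ) + 1)) * ((6 * (k:ℝ) + 7) * ((k:ℝ) + 1) ^ 2 * (1/4) ^ (k+1)) :=
        Summable.tsum_le_tsum (fun k => tail_bound n k) hs1 hs2
    _ = (1 / ((n:ℝ) + 1)) * Cb := tsum_mul_left
    _ = Cb / ((n:ℝ) + 1) := by ring

lemma tail_nonneg (n : ℕ) : 0 ≤ ∑' k, F n (k + 1) :=
  tsum_nonneg (fun k => F_nonneg n (k + 1))

lemma tail_tendsto_zero :
    Filter.Tendsto (fun n : ℕ => ∑' k, F n (k + 1)) Filter.atTop (nhds 0) := by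
  apply squeeze_zero tail_nonneg tail_le
  have h := tendsto_one_div_add_atTop_nhds_zero_nat (𝕜 := ℝ)
  have := h.const_mul Cb
  simp only [mul_zero] at this
  apply this.congr
  intro n
  ring

-- Wallis
noncomputable def Wp (n : ℕ) : ℝ :=
  ∏ i ∈ Finset.range n, ((2 : ℝ) * i + 2) / (2 * i + 1) * ((2 * i + 2) / (2 * i + 3))

lemma Wp_identity (n : ℕ) :
    Wp n * ((2 * (n:ℝ) + 1) * (poch (1/2) n / (n.factorial : ℝ)) ^ 2) = 1 := by
  induction n with
  | zero => simp [Wp, poch]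
  | succ n ih =>
      have hnf : ((n.factorial : ℝ)) ≠ 0 := by exact_mod_cast n.factorial_ne_zero
      have h1 : (2 * (n:ℝ) + 1) ≠ 0 := by positivity
      have h2 : (2 * (n:ℝ) + 3) ≠ 0 := by positivity
      have hgoal : ((n:ℝ) + 1) ≠ 0 := by positivity
      unfold Wp at ih ⊢
      rw [Finset.prod_range_succ, poch_succ, Nat.factorial_succ]
      push_cast
      field_simp at ih ⊢
      linear_combination ((2*(n:ℝ)+2)^2*(2*(n:ℝ)+3)*(1+2*(n:ℝ)) - (2*(n:ℝ)+1)^2*(2*(n:ℝ)+3)^2) * ih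

lemma Wp_pos (n : ℕ) : 0 < Wp n := by
  apply Finset.prod_pos
  intro i _
  have h1 : (0:ℝ) < 2 * i + 1 := by positivity
  have h2 : (0:ℝ) < 2 * i + 2 := by positivity
  have h3 : (0:ℝ) < 2 * i + 3 := by positivity
  positivity

lemma head_tendsto :
    Filter.Tendsto (fun n : ℕ => (4 * (n:ℝ) + 1) * (poch (1/2) n / (n.factorial : ℝ)) ^ 2)
      Filter.atTop (nhds (4 / π)) := by
  have hW : Filter.Tendsto Wp Filter.atTop (nhds (π / 2)) := Real.tendsto_prod_pi_div_two
  have hπ : (0:ℝ) < π := Real.pi_pos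
  have hne : (π / 2 : ℝ) ≠ 0 := by positivity
  have hinv : Filter.Tendsto (fun n => (Wp n)⁻¹) Filter.atTop (nhds ((π / 2)⁻¹)) :=
    hW.inv₀ hne
  have key : ∀ n : ℕ, (2 * (n:ℝ) + 1) * (poch (1/2) n / (n.factorial : ℝ)) ^ 2 = (Wp n)⁻¹ := by
    intro n
    have h := Wp_identity n
    have := (Wp_pos n).ne'
    field_simp at h ⊢
    linarith
  have hmain : Filter.Tendsto (fun n : ℕ => (2 * (n:ℝ) + 1) * (poch (1/2) n / (n.factorial : ℝ)) ^ 2)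
      Filter.atTop (nhds (2 / π)) := by
    have h2 : ((π / 2 : ℝ))⁻¹ = 2 / π := by field_simp
    rw [← h2]
    apply hinv.congr
    intro n
    exact (key n).symm
  have hsq : Filter.Tendsto (fun n : ℕ => (poch (1/2) n / (n.factorial : ℝ)) ^ 2)
      Filter.atTop (nhds 0) := by
    have hfr : Filter.Tendsto (fun n : ℕ => (2 * (n:ℝ) + 1)⁻¹) Filter.atTop (nhds 0) := by
      apply Filter.Tendsto.inv_tendsto_atTop
      apply Filter.tendsto_atTop_add_const_right
      exact (tendsto_natCast_atTop_atTop (R := ℝ)).const_mul_atTop (by norm_num)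
    have := hmain.mul hfr
    simp only [mul_zero] at this
    apply this.congr
    intro n
    have h1 : (2 * (n:ℝ) + 1) ≠ 0 := by positivity
    field_simp
  have : Filter.Tendsto (fun n : ℕ =>
      2 * ((2 * (n:ℝ) + 1) * (poch (1/2) n / (n.factorial : ℝ)) ^ 2)
        - (poch (1/2) n / (n.factorial : ℝ)) ^ 2)
      Filter.atTop (nhds (2 * (2 / π) - 0)) := (hmain.const_mul 2).sub hsq
  have heq : 2 * (2 / π) - 0 = 4 / π := by ring
  rw [heq] at this
  apply this.congr
  intro n
  ring

lemma S_tendsto : Filter.Tendsto S Filter.atTop (nhds (4 / π)) := by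
  have hsplit : ∀ n, S n = F n 0 + ∑' k, F n (k + 1) := by
    intro n
    have h := Summable.sum_add_tsum_nat_add 1 (summable_F n)
    unfold S
    rw [← h]
    simp
  have h1 : Filter.Tendsto (fun n => F n 0 + ∑' k, F n (k + 1)) Filter.atTop
      (nhds (4 / π + 0)) := by
    apply Filter.Tendsto.add _ tail_tendsto_zero
    have := head_tendsto
    apply this.congr
    intro n
    exact (F_head n).symm
  rw [add_zero] at h1
  apply h1.congr
  intro n
  exact (hsplit n).symm

lemma S_zero_eq : S 0 = 4 / π := by
  have h1 : Filter.Tendsto S Filter.atTop (nhds (S 0)) := by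
    have : S = fun _ => S 0 := funext S_const
    rw [this]
    exact tendsto_const_nhds
  exact tendsto_nhds_unique h1 S_tendsto

end WZaux

theorem stmt0 :
    ∑' k : ℕ, (6 * (k : ℝ) + 1) * (poch (1/2) k) ^ 3 / ((k.factorial : ℝ) ^ 3 * 4 ^ k)
      = 4 / π := by
  rw [← WZaux.S_zero_eq]
  unfold WZaux.S
  apply tsum_congr
  intro k
  unfold WZaux.F WZaux.W
  have h0 : poch (1/2) 0 = 1 := by simp [poch]
  rw [h0]
  simp only [Nat.cast_zero, zero_add]
  ring
end

section
/- The infinite series ∑_{k=0}^∞ (3k+2) · ((1)_k)^3 / (((3/2)_k)^3 · 4^k) equals π²/4. -/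
open Real

noncomputable def BB (m : ℕ) : ℕ → ℝ
  | 0 => 1 / (2 * (m : ℝ) + 1) ^ 2
  | k + 1 => BB m k *
      (2 * ((k : ℝ) + 1) ^ 3 / ((2 * (k : ℝ) + 3) * (2 * (k : ℝ) + 2 * (m : ℝ) + 3) ^ 2))

noncomputable def FF (m k : ℕ) : ℝ := (3 * (k : ℝ) + 2 * (m : ℝ) + 2) * BB m k

noncomputable def GG (m k : ℕ) : ℝ := (4 * (k : ℝ) + 2) * BB m k

lemma BB_zero (m : ℕ) : BB m 0 = 1 / (2 * (m : ℝ) + 1) ^ 2 := rfl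

lemma BB_succ (m k : ℕ) : BB m (k + 1) = BB m k *
    (2 * ((k : ℝ) + 1) ^ 3 / ((2 * (k : ℝ) + 3) * (2 * (k : ℝ) + 2 * (m : ℝ) + 3) ^ 2)) := rfl

lemma BB_pos (m k : ℕ) : 0 < BB m k := by
  induction k with
  | zero => rw [BB_zero]; positivity
  | succ n ih =>
    rw [BB_succ]
    have h1 : (0:ℝ) < 2 * (n : ℝ) + 3 := by positivity
    have h2 : (0:ℝ) < 2 * (n : ℝ) + 2 * (m : ℝ) + 3 := by positivity
    positivity

lemma BB_le (m k : ℕ) : BB m k ≤ 1 / (2 * (m : ℝ) + 1) ^ 2 * (1 / 4) ^ k := by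
  induction k with
  | zero => rw [BB_zero]; simp
  | succ n ih =>
    rw [BB_succ]
    have hB := BB_pos m n
    have hn : (0:ℝ) ≤ (n : ℝ) := Nat.cast_nonneg n
    have hm : (0:ℝ) ≤ (m : ℝ) := Nat.cast_nonneg m
    have h1 : (0:ℝ) < 2 * (n : ℝ) + 3 := by positivity
    have h2 : (0:ℝ) < 2 * (n : ℝ) + 2 * (m : ℝ) + 3 := by positivity
    have hr : 2 * ((n : ℝ) + 1) ^ 3 / ((2 * (n : ℝ) + 3) * (2 * (n : ℝ) + 2 * (m : ℝ) + 3) ^ 2)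
        ≤ 1 / 4 := by
      rw [div_le_div_iff₀ (by positivity) (by norm_num)]
      nlinarith [sq_nonneg ((n:ℝ)+1), sq_nonneg ((m:ℝ))]
    calc BB m n * (2 * ((n : ℝ) + 1) ^ 3 /
          ((2 * (n : ℝ) + 3) * (2 * (n : ℝ) + 2 * (m : ℝ) + 3) ^ 2))
        ≤ BB m n * (1 / 4) := by
          exact mul_le_mul_of_nonneg_left hr (le_of_lt hB)
      _ ≤ (1 / (2 * (m : ℝ) + 1) ^ 2 * (1 / 4) ^ n) * (1 / 4) := by
          apply mul_le_mul_of_nonneg_right ih; norm_num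
      _ = 1 / (2 * (m : ℝ) + 1) ^ 2 * (1 / 4) ^ (n + 1) := by ring

lemma BB_succ_m (m k : ℕ) : BB (m + 1) k =
    BB m k * ((2 * (m : ℝ) + 1) ^ 2 / (2 * (k : ℝ) + 2 * (m : ℝ) + 3) ^ 2) := by
  induction k with
  | zero =>
    rw [BB_zero, BB_zero]
    have h1 : ((2:ℝ) * (m : ℝ) + 1) ≠ 0 := by positivity
    have h2 : ((2:ℝ) * ((m : ℕ) + 1 : ℕ) + 1) = 2 * (m:ℝ) + 3 := by push_cast; ring
    have h3 : ((2:ℝ) * (m : ℝ) + 3) ≠ 0 := by positivity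
    rw [h2]
    field_simp
    simp
  | succ n ih =>
    rw [BB_succ, BB_succ, ih]
    have h1 : (0:ℝ) < 2 * (n : ℝ) + 3 := by positivity
    have h2 : (0:ℝ) < 2 * (n : ℝ) + 2 * (m : ℝ) + 3 := by positivity
    have h3 : (0:ℝ) < 2 * (n : ℝ) + 2 * (m : ℝ) + 5 := by positivity
    have h4 : ((2:ℝ) * (n : ℝ) + 2 * ((m : ℕ) + 1 : ℕ) + 3) = 2 * (n:ℝ) + 2 * (m:ℝ) + 5 := by
      push_cast; ring
    have h5 : ((2:ℝ) * ((n : ℕ) + 1 : ℕ) + 2 * (m : ℝ) + 3) = 2 * (n:ℝ) + 2 * (m:ℝ) + 5 := by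
      push_cast; ring
    rw [h4, h5]
    field_simp

lemma key (m k : ℕ) : FF m k - FF (m + 1) k = GG m k - GG m (k + 1) := by
  rw [FF, FF, GG, GG, BB_succ_m, BB_succ]
  have h1 : (0:ℝ) < 2 * (k : ℝ) + 3 := by positivity
  have h2 : (0:ℝ) < 2 * (k : ℝ) + 2 * (m : ℝ) + 3 := by positivity
  have hc1 : ((3:ℝ) * (k:ℕ) + 2 * ((m:ℕ) + 1 : ℕ) + 2) = 3 * (k:ℝ) + 2 * (m:ℝ) + 4 := by
    push_cast; ring
  have hc2 : ((4:ℝ) * ((k:ℕ) + 1 : ℕ) + 2) = 4 * (k:ℝ) + 6 := by push_cast; ring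
  rw [hc1, hc2]
  have hB := BB_pos m k
  field_simp
  ring

lemma FF_nonneg (m k : ℕ) : 0 ≤ FF m k := by
  rw [FF]
  have := BB_pos m k
  positivity

lemma two_pow_ge (k : ℕ) : (k : ℝ) + 1 ≤ 2 ^ k := by
  have h := Nat.lt_two_pow_self (n := k)
  have : (k : ℝ) + 1 ≤ ((2 ^ k : ℕ) : ℝ) := by exact_mod_cast h
  simpa [Nat.cast_pow] using this

lemma half_pow (k : ℕ) : ((1:ℝ) / 2) ^ k = 2 ^ k * (1 / 4) ^ k := by
  rw [← mul_pow]; norm_num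

lemma FF_le (m k : ℕ) : FF m k ≤ (2 * (m : ℝ) + 3) / (2 * (m : ℝ) + 1) ^ 2 * (1 / 2) ^ k := by
  have hB := BB_le m k
  have hco : (0:ℝ) ≤ 3 * (k : ℝ) + 2 * (m : ℝ) + 2 := by positivity
  have h1 : FF m k ≤ (3 * (k : ℝ) + 2 * (m : ℝ) + 2) * (1 / (2 * (m : ℝ) + 1) ^ 2 * (1 / 4) ^ k) :=
    mul_le_mul_of_nonneg_left hB hco
  refine h1.trans ?_
  have h2 := two_pow_ge k
  have h3 : (0:ℝ) < (1 / 4 : ℝ) ^ k := by positivity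
  have h4 : (0:ℝ) < (2 * (m : ℝ) + 1) ^ 2 := by positivity
  have hm : (0:ℝ) ≤ (m : ℝ) := Nat.cast_nonneg m
  have hk : (0:ℝ) ≤ (k : ℝ) := Nat.cast_nonneg k
  have key2 : 3 * (k:ℝ) + 2 * (m:ℝ) + 2 ≤ (2 * (m:ℝ) + 3) * 2 ^ k := by
    nlinarith [mul_le_mul_of_nonneg_left h2 (by positivity : (0:ℝ) ≤ 2 * (m:ℝ) + 3)]
  have e1 : (3 * (k:ℝ) + 2 * (m:ℝ) + 2) * (1 / (2 * (m : ℝ) + 1) ^ 2 * (1 / 4) ^ k)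
      = (3 * (k:ℝ) + 2 * (m:ℝ) + 2) * (1 / 4) ^ k / (2 * (m : ℝ) + 1) ^ 2 := by ring
  have e2 : (2 * (m : ℝ) + 3) / (2 * (m : ℝ) + 1) ^ 2 * ((1:ℝ) / 2) ^ k
      = (2 * (m : ℝ) + 3) * 2 ^ k * (1 / 4) ^ k / (2 * (m : ℝ) + 1) ^ 2 := by
    rw [half_pow]; ring
  rw [e1, e2]
  gcongr

lemma GG_nonneg (m k : ℕ) : 0 ≤ GG m k := by
  rw [GG]
  have := BB_pos m k
  positivity

lemma GG_le (m k : ℕ) : GG m k ≤ 6 * (1 / 2) ^ k := by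
  rw [GG]
  have hB := BB_le m k
  have hco : (0:ℝ) ≤ 4 * (k : ℝ) + 2 := by positivity
  have h1 : (4 * (k : ℝ) + 2) * BB m k ≤
      (4 * (k : ℝ) + 2) * (1 / (2 * (m : ℝ) + 1) ^ 2 * (1 / 4) ^ k) :=
    mul_le_mul_of_nonneg_left hB hco
  refine h1.trans ?_
  have hm1 : (1:ℝ) ≤ (2 * (m : ℝ) + 1) ^ 2 := by nlinarith [Nat.cast_nonneg (α := ℝ) m]
  have h5 : 1 / (2 * (m : ℝ) + 1) ^ 2 ≤ 1 := by
    rw [div_le_one (by positivity)]; exact hm1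
  have h3 : (0:ℝ) < (1 / 4 : ℝ) ^ k := by positivity
  have h2 := two_pow_ge k
  rw [half_pow]
  have hk : (0:ℝ) ≤ (k : ℝ) := Nat.cast_nonneg k
  have h6 : (4 * (k : ℝ) + 2) * (1 / (2 * (m : ℝ) + 1) ^ 2 * (1 / 4) ^ k) ≤
      (4 * (k : ℝ) + 2) * (1 / 4 : ℝ) ^ k := by
    apply mul_le_mul_of_nonneg_left _ hco
    calc 1 / (2 * (m : ℝ) + 1) ^ 2 * (1 / 4) ^ k ≤ 1 * (1/4:ℝ)^k :=
          mul_le_mul_of_nonneg_right h5 (le_of_lt h3)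
      _ = (1/4:ℝ)^k := by ring
  refine h6.trans ?_
  have : (4 * (k : ℝ) + 2) ≤ 6 * 2 ^ k := by nlinarith
  nlinarith

lemma summable_half_geom (C : ℝ) : Summable (fun k : ℕ => C * (1 / 2 : ℝ) ^ k) := by
  exact (summable_geometric_of_lt_one (by norm_num) (by norm_num)).mul_left C

lemma summable_FF (m : ℕ) : Summable (FF m) := by
  apply Summable.of_nonneg_of_le (FF_nonneg m) (FF_le m)
  exact summable_half_geom _

noncomputable def AA (m : ℕ) : ℝ := ∑' k, FF m k

lemma AA_nonneg (m : ℕ) : 0 ≤ AA m := tsum_nonneg (FF_nonneg m)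

lemma AA_le (m : ℕ) : AA m ≤ 6 / ((m : ℝ) + 1) := by
  have h1 : AA m ≤ ∑' k : ℕ, (2 * (m : ℝ) + 3) / (2 * (m : ℝ) + 1) ^ 2 * (1 / 2) ^ k :=
    Summable.tsum_le_tsum (FF_le m) (summable_FF m) (summable_half_geom _)
  have h2 : ∑' k : ℕ, (2 * (m : ℝ) + 3) / (2 * (m : ℝ) + 1) ^ 2 * (1 / 2 : ℝ) ^ k
      = (2 * (m : ℝ) + 3) / (2 * (m : ℝ) + 1) ^ 2 * 2 := by
    rw [tsum_mul_left, tsum_geometric_of_lt_one (by norm_num) (by norm_num)]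
    norm_num
  rw [h2] at h1
  refine h1.trans ?_
  have hm : (0:ℝ) ≤ (m : ℝ) := Nat.cast_nonneg m
  rw [div_mul_eq_mul_div, div_le_div_iff₀ (by positivity) (by positivity)]
  nlinarith

lemma GG_tendsto (m : ℕ) :
    Filter.Tendsto (fun k => GG m k) Filter.atTop (nhds 0) := by
  apply squeeze_zero (GG_nonneg m) (GG_le m)
  have h := tendsto_pow_atTop_nhds_zero_of_lt_one (by norm_num : (0:ℝ) ≤ 1/2) (by norm_num)
  simpa using h.const_mul 6

lemma telescope (m : ℕ) : AA m = 2 / (2 * (m : ℝ) + 1) ^ 2 + AA (m + 1) := by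
  have hsum1 := summable_FF m
  have hsum2 := summable_FF (m + 1)
  have h1 : Filter.Tendsto (fun n => ∑ i ∈ Finset.range n, (FF m i - FF (m + 1) i))
      Filter.atTop (nhds (AA m - AA (m + 1))) :=
    (hsum1.hasSum.sub hsum2.hasSum).tendsto_sum_nat
  have hpart : ∀ n, ∑ i ∈ Finset.range n, (FF m i - FF (m + 1) i) = GG m 0 - GG m n := by
    intro n
    rw [Finset.sum_congr rfl (fun i _ => key m i)]
    exact Finset.sum_range_sub' (GG m) n
  have h2 : Filter.Tendsto (fun n => ∑ i ∈ Finset.range n, (FF m i - FF (m + 1) i))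
      Filter.atTop (nhds (GG m 0 - 0)) := by
    simp only [hpart]
    exact Filter.Tendsto.sub tendsto_const_nhds (GG_tendsto m)
  have h3 : AA m - AA (m + 1) = GG m 0 - 0 := tendsto_nhds_unique h1 h2
  have h4 : GG m 0 = 2 / (2 * (m : ℝ) + 1) ^ 2 := by
    rw [GG, BB_zero]; push_cast; ring
  rw [h4] at h3
  linarith

lemma AA_partial (M : ℕ) :
    AA 0 = (∑ m ∈ Finset.range M, 2 / (2 * (m : ℝ) + 1) ^ 2) + AA M := by
  induction M with
  | zero => simp
  | succ n ih =>
    rw [Finset.sum_range_succ, ih, telescope n]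
    ring

lemma AA_tendsto : Filter.Tendsto (fun m => AA m) Filter.atTop (nhds 0) := by
  apply squeeze_zero AA_nonneg AA_le
  have h := tendsto_one_div_add_atTop_nhds_zero_nat (𝕜 := ℝ)
  have h6 := h.const_mul (6:ℝ)
  simp only [mul_one_div] at h6
  simpa using h6

lemma hasSum_odd : HasSum (fun m : ℕ => 2 / (2 * (m : ℝ) + 1) ^ 2) (π ^ 2 / 4) := by
  have hf := hasSum_zeta_two
  have hsumm : Summable (fun n : ℕ => (1:ℝ) / (n : ℝ) ^ 2) := hf.summable
  have hinj : Function.Injective (fun k : ℕ => 2 * k + 1) := by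
    intro a b hab
    simp only at hab
    omega
  have hodd_summ : Summable (fun k : ℕ => (1:ℝ) / ((2 * k + 1 : ℕ) : ℝ) ^ 2) :=
    hsumm.comp_injective hinj
  have heven : HasSum (fun k : ℕ => (1:ℝ) / (((2 * k : ℕ)) : ℝ) ^ 2) (π ^ 2 / 24) := by
    have h4 := hf.mul_left (1/4)
    have heq : (fun k : ℕ => (1:ℝ) / (((2 * k : ℕ)) : ℝ) ^ 2)
        = fun k : ℕ => 1 / 4 * ((1:ℝ) / (k : ℝ) ^ 2) := by
      funext k
      push_cast
      rw [mul_pow, div_mul_div_comm]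
      norm_num
    rw [heq]
    convert h4 using 1
    rfl
    ring
  obtain ⟨b, hb⟩ := hodd_summ
  have htot : HasSum (fun n : ℕ => (1:ℝ) / (n : ℝ) ^ 2) (π ^ 2 / 24 + b) :=
    HasSum.even_add_odd heven hb
  have hbval : b = π ^ 2 / 8 := by
    have := hf.unique htot
    linarith
  rw [hbval] at hb
  have hb2 := hb.mul_left 2
  have : (fun k : ℕ => 2 * ((1:ℝ) / ((2 * k + 1 : ℕ) : ℝ) ^ 2))
      = fun m : ℕ => 2 / (2 * (m : ℝ) + 1) ^ 2 := by
    funext k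
    push_cast
    ring
  rw [this] at hb2
  convert hb2 using 1
  rfl
  ring

lemma poch32_pos (k : ℕ) : 0 < poch (3/2) k := by
  apply Finset.prod_pos
  intro i _
  positivity

lemma BB0_eq (k : ℕ) : BB 0 k = (poch 1 k) ^ 3 / ((poch (3/2) k) ^ 3 * 4 ^ k) := by
  induction k with
  | zero => simp [BB_zero, poch]
  | succ n ih =>
    rw [BB_succ, ih]
    have hp1 : poch 1 (n + 1) = poch 1 n * (1 + n) := Finset.prod_range_succ _ _
    have hp2 : poch (3/2) (n + 1) = poch (3/2) n * (3/2 + n) := Finset.prod_range_succ _ _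
    rw [hp1, hp2]
    have h1 : (0:ℝ) < poch (3/2) n := poch32_pos n
    have h2 : (0:ℝ) < 3/2 + (n:ℝ) := by positivity
    have h3 : (0:ℝ) < 2 * (n:ℝ) + 3 := by positivity
    have h4 : (0:ℝ) < (4:ℝ) ^ n := by positivity
    have hc : (2 * (n:ℝ) + 2 * ((0:ℕ):ℝ) + 3) = 2 * (n:ℝ) + 3 := by push_cast; ring
    rw [hc]
    field_simp
    ring

theorem stmt4 :
    ∑' k : ℕ, (3 * (k : ℝ) + 2) * (poch 1 k) ^ 3 / ((poch (3/2) k) ^ 3 * 4 ^ k)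
      = π ^ 2 / 4 := by
  have hterm : ∀ k : ℕ, (3 * (k : ℝ) + 2) * (poch 1 k) ^ 3 / ((poch (3/2) k) ^ 3 * 4 ^ k)
      = FF 0 k := by
    intro k
    rw [FF, BB0_eq, mul_div_assoc]
    push_cast
    ring
  have hA : (∑' k : ℕ, (3 * (k : ℝ) + 2) * (poch 1 k) ^ 3 / ((poch (3/2) k) ^ 3 * 4 ^ k))
      = AA 0 := by
    rw [AA]
    exact tsum_congr hterm
  rw [hA]
  have h1 : Filter.Tendsto (fun M => (∑ m ∈ Finset.range M, 2 / (2 * (m : ℝ) + 1) ^ 2) + AA M)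
      Filter.atTop (nhds (π ^ 2 / 4 + 0)) :=
    Filter.Tendsto.add hasSum_odd.tendsto_sum_nat AA_tendsto
  have h2 : (fun M => (∑ m ∈ Finset.range M, 2 / (2 * (m : ℝ) + 1) ^ 2) + AA M)
      = fun _ : ℕ => AA 0 := by
    funext M
    exact (AA_partial M).symm
  rw [h2] at h1
  have h3 : Filter.Tendsto (fun _ : ℕ => AA 0) Filter.atTop (nhds (AA 0)) :=
    tendsto_const_nhds
  have := tendsto_nhds_unique h3 h1
  linarith
end
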